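/- Let d ≥ 0 and ψ ∈ [0, π/2). Suppose a point z = x + iy in the upper half-plane satisfies y ≥ 1 and |z| ≤ e^d / cos(ψ). If A is defined by A² + 1 = (e^d/cos ψ)², then the hyperbolic distance from i to z is at most the hyperbolic distance from i to 2A + i, and hence cosh(d(i, z)) ≤ 2e^{2d}/cos²(ψ) − 1. -/

import Mathlib

open Real

theorem cosh_dist_le_of_norm_le (d ψ : ℝ) (hd : 0 ≤ d) (hψ0 : 0 ≤ ψ) (hψ : ψ < π / 2)
    (A : ℝ) (hA0 : 0 ≤ A) (hA : A ^ 2 + 1 = (Real.exp d / Real.cos ψ) ^ 2)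
    (i z w : UpperHalfPlane)
    (hi : (i : ℂ) = Complex.I)
    (hz : 1 ≤ z.im) (hznorm : ‖(z : ℂ)‖ ≤ Real.exp d / Real.cos ψ)
    (hw : (w : ℂ) = 2 * A + Complex.I) :
    dist i z ≤ dist i w ∧
    Real.cosh (dist i z) ≤ 2 * Real.exp (2 * d) / Real.cos ψ ^ 2 - 1 := by
  set E : ℝ := Real.exp d / Real.cos ψ with hE
  have hcos : 0 < Real.cos ψ := Real.cos_pos_of_mem_Ioo ⟨by linarith [Real.pi_pos], hψ⟩
  have hcos1 : Real.cos ψ ≤ 1 := Real.cos_le_one ψ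
  have hexp1 : 1 ≤ Real.exp d := by simpa using Real.exp_le_exp.2 hd
  have hE1 : 1 ≤ E := by
    rw [hE, le_div_iff₀ hcos]; linarith
  have hiim : i.im = 1 := by
    rw [← UpperHalfPlane.coe_im, hi]; simp
  have hwim : w.im = 1 := by
    rw [← UpperHalfPlane.coe_im, hw]; simp
  -- cosh dist i w
  have hdw : dist (i : ℂ) (w : ℂ) = 2 * A := by
    rw [hi, hw, Complex.dist_eq]
    have : Complex.I - (2 * A + Complex.I) = -(2 * A : ℝ) := by push_cast; ring
    rw [this]
    simp [abs_of_nonneg, hA0]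
  have hcoshw : Real.cosh (dist i w) = 2 * E ^ 2 - 1 := by
    rw [UpperHalfPlane.cosh_dist, hdw, hiim, hwim, ← hA]
    ring
  have hE2 : 2 * E ^ 2 - 1 = 2 * Real.exp (2 * d) / Real.cos ψ ^ 2 - 1 := by
    rw [hE, div_pow, ← Real.exp_nat_mul]
    norm_num
    rw [mul_comm]
    ring
  -- cosh dist i z
  have hzim : 0 < z.im := z.im_pos
  have hsq : (z : ℂ).re ^ 2 + z.im ^ 2 ≤ E ^ 2 := by
    have := Complex.sq_norm (z : ℂ)
    have h2 : ‖(z:ℂ)‖ ^ 2 ≤ E ^ 2 := by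
      apply pow_le_pow_left₀ (norm_nonneg _) hznorm
    rw [Complex.sq_norm, Complex.normSq_apply] at h2
    have : (z : ℂ).im = z.im := rfl
    nlinarith [h2]
  have hdz : dist (i : ℂ) (z : ℂ) ^ 2 = (z : ℂ).re ^ 2 + (z.im - 1) ^ 2 := by
    rw [hi, Complex.dist_eq, Complex.sq_norm, Complex.normSq_apply, ← UpperHalfPlane.coe_im]
    simp
    ring
  have hcoshz : Real.cosh (dist i z) ≤ 2 * E ^ 2 - 1 := by
    rw [UpperHalfPlane.cosh_dist, hdz, hiim]
    have h' : ((z : ℂ).re ^ 2 + (z.im - 1) ^ 2) / (2 * 1 * z.im) ≤ 2 * E ^ 2 - 2 := by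
      rw [div_le_iff₀ (by positivity : (0:ℝ) < 2 * 1 * z.im)]
      nlinarith [hz, hsq, hE1]
    linarith
  refine ⟨?_, by rw [← hE2]; exact hcoshz⟩
  have : Real.cosh (dist i z) ≤ Real.cosh (dist i w) := by rw [hcoshw]; exact hcoshz
  have := Real.cosh_le_cosh.1 this
  rwa [abs_of_nonneg dist_nonneg, abs_of_nonneg dist_nonneg] at this
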